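/- Local complementation and switching act transitively on the set of all simple graphs on a fixed finite vertex set: for any two simple graphs G and H on the vertex set {1,...,n}, there is a finite sequence of operations, each of which is either local complementation γ_i at some vertex i or switching s_i at some vertex i, transforming G into H. Equivalently, the reflexive-transitive closure of the relation relating G to γ_i(G) and to s_i(G) for every vertex i relates every pair of graphs on {1,...,n}. -/

import Mathlib

/-- The local complement of `G` at the vertex `i`: the adjacency of each pair of distinct
vertices that both lie in the neighborhood of `i` is toggled; all other adjacencies are
unchanged. -/
def localComplement {V : Type*} (G : SimpleGraph V) (i : V) : SimpleGraph V where
  Adj k l := k ≠ l ∧ ¬ (G.Adj k l ↔ G.Adj i k ∧ G.Adj i l)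
  symm := by
    constructor
    rintro k l ⟨h1, h2⟩
    refine ⟨h1.symm, ?_⟩
    rw [G.adj_comm l k]
    tauto
  loopless := by constructor; rintro k ⟨h1, -⟩; exact h1 rfl

/-- The switching of `G` at the vertex `i`: the adjacency of every pair `{i, j}` with
`j ≠ i` is toggled; all edges not incident with `i` are unchanged. -/
def switching {V : Type*} (G : SimpleGraph V) (i : V) : SimpleGraph V where
  Adj k l := k ≠ l ∧ ¬ (G.Adj k l ↔ (k = i ∨ l = i))
  symm := by
    constructor
    rintro k l ⟨h1, h2⟩
    refine ⟨h1.symm, ?_⟩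
    rw [G.adj_comm l k]
    tauto
  loopless := by constructor; rintro k ⟨h1, -⟩; exact h1 rfl

lemma localComplement_adj {V : Type*} (G : SimpleGraph V) (i k l : V) :
    (localComplement G i).Adj k l ↔ k ≠ l ∧ ¬ (G.Adj k l ↔ G.Adj i k ∧ G.Adj i l) := Iff.rfl

lemma switching_adj {V : Type*} (G : SimpleGraph V) (i k l : V) :
    (switching G i).Adj k l ↔ k ≠ l ∧ ¬ (G.Adj k l ↔ (k = i ∨ l = i)) := Iff.rfl

/-- Auxiliary: the composite `γ_a ∘ s_a ∘ γ_a` in closed form. -/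
def sigmaOp {V : Type*} (G : SimpleGraph V) (a : V) : SimpleGraph V where
  Adj k l := k ≠ l ∧ ((k = a ∨ l = a) → ¬ G.Adj k l) ∧
      (¬ (k = a ∨ l = a) → (G.Adj k l ↔ ¬ (G.Adj a k ↔ G.Adj a l)))
  symm := by
    constructor
    rintro k l ⟨h1, h2, h3⟩
    refine ⟨h1.symm, ?_, ?_⟩
    · rw [G.adj_comm l k]; tauto
    · rw [G.adj_comm l k]; tauto
  loopless := by constructor; rintro k ⟨h1, -⟩; exact h1 rfl

lemma sigmaOp_adj {V : Type*} (G : SimpleGraph V) (a k l : V) :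
    (sigmaOp G a).Adj k l ↔ k ≠ l ∧ ((k = a ∨ l = a) → ¬ G.Adj k l) ∧
      (¬ (k = a ∨ l = a) → (G.Adj k l ↔ ¬ (G.Adj a k ↔ G.Adj a l))) := Iff.rfl

/-- Auxiliary: toggling a single edge. -/
def toggleEdge {V : Type*} (G : SimpleGraph V) (a b : V) : SimpleGraph V where
  Adj k l := k ≠ l ∧ ¬ (G.Adj k l ↔ ((k = a ∧ l = b) ∨ (k = b ∧ l = a)))
  symm := by
    constructor
    rintro k l ⟨h1, h2⟩
    refine ⟨h1.symm, ?_⟩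
    rw [G.adj_comm l k]
    tauto
  loopless := by constructor; rintro k ⟨h1, -⟩; exact h1 rfl

lemma toggleEdge_adj {V : Type*} (G : SimpleGraph V) (a b k l : V) :
    (toggleEdge G a b).Adj k l ↔
      k ≠ l ∧ ¬ (G.Adj k l ↔ ((k = a ∧ l = b) ∨ (k = b ∧ l = a))) := Iff.rfl

lemma step1 {V : Type*} (G : SimpleGraph V) (a : V) :
    localComplement (switching (localComplement G a) a) a = sigmaOp G a := by
  ext k l
  simp only [localComplement_adj, switching_adj, sigmaOp_adj]
  have irr : ¬ G.Adj a a := G.loopless.irrefl a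
  by_cases hk : k = a
  · subst hk
    by_cases hl : l = k
    · subst hl; simp_all
    · simp_all [G.adj_comm l k, ne_comm]
      try tauto
  · by_cases hl : l = a
    · subst hl
      simp_all [G.adj_comm k l, ne_comm]
      try tauto
    · simp_all [G.adj_comm k a, G.adj_comm l a, ne_comm]
      try tauto

set_option maxHeartbeats 2000000 in
lemma step2 {V : Type*} (G : SimpleGraph V) (a b : V) (hab : a ≠ b) :
    sigmaOp (switching (sigmaOp G a) b) a = toggleEdge G a b := by
  ext k l
  simp only [switching_adj, sigmaOp_adj, toggleEdge_adj]
  have irr : ¬ G.Adj a a := G.loopless.irrefl a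
  have irrb : ¬ G.Adj b b := G.loopless.irrefl b
  by_cases hk : k = a <;> by_cases hl : l = a <;>
    by_cases hk' : k = b <;> by_cases hl' : l = b <;>
    simp_all [G.adj_comm k a, G.adj_comm l a, G.adj_comm b a, G.adj_comm k b,
      G.adj_comm l b, G.adj_comm l k, ne_comm, hab, hab.symm] <;> try tauto

section
variable {n : ℕ}

local notation "R" => (fun G' H' : SimpleGraph (Fin n) =>
        ∃ i : Fin n, H' = localComplement G' i ∨ H' = switching G' i)

lemma reach_toggle (G : SimpleGraph (Fin n)) (a b : Fin n) (hab : a ≠ b) :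
    Relation.ReflTransGen R G (toggleEdge G a b) := by
  have habs : ∀ (X : SimpleGraph (Fin n)), Relation.ReflTransGen R X (sigmaOp X a) := by
    intro X
    rw [← step1 X a]
    have h1 : R X (localComplement X a) := ⟨a, Or.inl rfl⟩
    have h2 : R (localComplement X a) (switching (localComplement X a) a) :=
      ⟨a, Or.inr rfl⟩
    have h3 : R (switching (localComplement X a) a)
        (localComplement (switching (localComplement X a) a) a) := ⟨a, Or.inl rfl⟩
    exact Relation.ReflTransGen.head h1
      (Relation.ReflTransGen.head h2 (Relation.ReflTransGen.single h3))
  rw [← step2 G a b hab]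
  exact ((habs G).tail ⟨b, Or.inr rfl⟩).trans (habs _)

end

/-- Local complementation and switching act transitively on the set of all simple graphs
on the vertex set `{1, ..., n}`: any graph can be transformed into any other by a finite
sequence of local complementations and switchings. -/
theorem localComplement_switching_transitive (n : ℕ) (G H : SimpleGraph (Fin n)) :
    Relation.ReflTransGen
      (fun G' H' : SimpleGraph (Fin n) =>
        ∃ i : Fin n, H' = localComplement G' i ∨ H' = switching G' i) G H := by
  classical
  set R := (fun G' H' : SimpleGraph (Fin n) =>
        ∃ i : Fin n, H' = localComplement G' i ∨ H' = switching G' i) with hR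
  -- diff set
  let D : SimpleGraph (Fin n) → Finset (Fin n × Fin n) := fun G' =>
    Finset.univ.filter (fun p => ¬ (G'.Adj p.1 p.2 ↔ H.Adj p.1 p.2))
  suffices h : ∀ m (G' : SimpleGraph (Fin n)), (D G').card ≤ m →
      Relation.ReflTransGen R G' H by
    exact h (D G).card G le_rfl
  intro m
  induction m with
  | zero =>
      intro G' hc
      have hD : D G' = ∅ := Finset.card_eq_zero.mp (Nat.le_zero.mp hc)
      have : G' = H := by
        ext k l
        by_contra hkl
        have : (k, l) ∈ D G' := by
          simp only [D, Finset.mem_filter, Finset.mem_univ, true_and]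
          tauto
        simp [hD] at this
      rw [this]
  | succ m ih =>
      intro G' hc
      by_cases hD : D G' = ∅
      · exact ih G' (by simp [hD])
      · obtain ⟨⟨a, b⟩, hab⟩ := Finset.nonempty_iff_ne_empty.mpr hD
        simp only [D, Finset.mem_filter, Finset.mem_univ, true_and] at hab
        have hne : a ≠ b := by
          rintro rfl
          exact hab (by simp)
        set G'' := toggleEdge G' a b with hG''
        have hother : ∀ k l : Fin n, ¬ ((k = a ∧ l = b) ∨ (k = b ∧ l = a)) →
            (G''.Adj k l ↔ G'.Adj k l) := by
          intro k l hkl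
          rw [hG'', toggleEdge_adj]
          constructor
          · rintro ⟨-, h2⟩; tauto
          · intro h1; exact ⟨G'.ne_of_adj h1, by tauto⟩
        have hpair : G''.Adj a b ↔ ¬ G'.Adj a b := by
          rw [hG'', toggleEdge_adj]
          constructor
          · rintro ⟨-, h2⟩; tauto
          · intro h1; exact ⟨hne, by tauto⟩
        have hsub : D G'' ⊆ D G' := by
          intro p hp
          simp only [D, Finset.mem_filter, Finset.mem_univ, true_and] at hp ⊢
          by_cases hcase : (p.1 = a ∧ p.2 = b) ∨ (p.1 = b ∧ p.2 = a)
          · exfalso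
            apply hp
            rcases hcase with ⟨h3, h4⟩ | ⟨h3, h4⟩ <;> rw [h3, h4]
            · rw [hpair]
              tauto
            · rw [G''.adj_comm b a, hpair, H.adj_comm b a]
              tauto
          · rw [hother p.1 p.2 hcase] at hp
            exact hp
        have hnotin : (a, b) ∉ D G'' := by
          simp only [D, Finset.mem_filter, Finset.mem_univ, true_and, not_not]
          rw [hpair]
          tauto
        have hin : (a, b) ∈ D G' := by
          simp only [D, Finset.mem_filter, Finset.mem_univ, true_and]
          exact hab
        have hlt : (D G'').card < (D G').card :=
          Finset.card_lt_card ⟨hsub, fun hcon => hnotin (hcon hin)⟩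
        exact (reach_toggle G' a b hne).trans (ih G'' (Nat.lt_succ_iff.mp
          (lt_of_lt_of_le hlt hc)))
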